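/- The constant sequence G₁ = (1,1,1,…) does not belong to the extension Σ̃: there is no absolutely summable sequence m with ∑m ≠ 0 such that m ⊗ G₁ has a convergent sum. (Proof via: G₁ ⊗ (e₀ − e₁) = e₀, ∑(e₀−e₁)=0, ∑e₀=1≠0.) -/

import Mathlib

open Filter Topology

/-- The Cauchy product. -/
noncomputable def cauchyMul (u v : ℕ → ℂ) : ℕ → ℂ :=
  fun n => ∑ k ∈ Finset.range (n + 1), u k * v (n - k)

/-- G₁ = (1,1,1,…) does not belong to the extension S̃em: there is no
    absolutely summable m with ∑ m ≠ 0 such that m ⊗ G₁ has a convergent sum. -/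
theorem stmt_11 :
    ¬ ∃ m : ℕ → ℂ, (Summable fun n => ‖m n‖) ∧ (∑' n, m n) ≠ 0 ∧
      ∃ s : ℂ, Tendsto (fun N => ∑ k ∈ Finset.range N, cauchyMul m (fun _ => (1 : ℂ)) k)
        atTop (𝓝 s) := by
  rintro ⟨m, hsum, hne, s, hs⟩
  have hm : Summable m := Summable.of_norm hsum
  -- c n = partial sums of m
  have hc : ∀ n, cauchyMul m (fun _ => (1 : ℂ)) n = ∑ k ∈ Finset.range (n + 1), m k := by
    intro n; simp [cauchyMul]
  -- terms of the convergent series tend to 0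
  have h1 : Tendsto (fun n => cauchyMul m (fun _ => (1 : ℂ)) n) atTop (𝓝 0) := by
    have hshift : Tendsto (fun n : ℕ => ∑ k ∈ Finset.range (n + 1),
        cauchyMul m (fun _ => (1 : ℂ)) k) atTop (𝓝 s) :=
      hs.comp (tendsto_add_atTop_nat 1)
    have := hshift.sub hs
    simp only [Finset.sum_range_succ, add_sub_cancel_left, sub_self] at this
    exact this
  -- but they tend to ∑' m
  have h2 : Tendsto (fun n => cauchyMul m (fun _ => (1 : ℂ)) n) atTop (𝓝 (∑' n, m n)) := by
    have := (hm.hasSum.tendsto_sum_nat).comp (tendsto_add_atTop_nat 1)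
    simpa only [hc, Function.comp_def] using this
  exact hne (tendsto_nhds_unique h2 h1)
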